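/- For even n ≥ 2, the denominator of B_n/n (in lowest terms) equals ∏_{p prime, (p−1) | n} p^{1+ν_p(n)}. -/

import Mathlib

open Finset

namespace VSaux

variable {p : ℕ} [hp : Fact p.Prime]


variable {p : ℕ} [hp : Fact p.Prime]

lemma two_pow_gt {j : ℕ} (hj : 3 ≤ j) : j < 2 ^ (j - 2) + 2 := by
  induction j with
  | zero => omega
  | succ k ih =>
    rcases Nat.lt_or_ge k 3 with h | h
    · interval_cases k <;> simp_all <;> omega
    · have := ih (by omega)
      have h2 : k + 1 - 2 = (k - 2) + 1 := by omega
      rw [h2, pow_succ]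
      omega

lemma valNat_le_sub_one {j : ℕ} (hj : 1 ≤ j) : padicValNat p j ≤ j - 1 := by
  have h1 : p ^ padicValNat p j ∣ j := pow_padicValNat_dvd
  have h2 : p ^ padicValNat p j ≤ j := Nat.le_of_dvd hj h1
  have h3 : padicValNat p j < 2 ^ padicValNat p j := Nat.lt_two_pow_self
  have h4 : (2:ℕ) ^ padicValNat p j ≤ p ^ padicValNat p j :=
    Nat.pow_le_pow_left hp.out.two_le _
  omega

lemma valNat_le_sub_two {j : ℕ} (hj : 3 ≤ j) : padicValNat p j ≤ j - 2 := by
  by_contra h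
  push_neg at h
  have h1 : p ^ padicValNat p j ∣ j := pow_padicValNat_dvd
  have h2 : p ^ padicValNat p j ≤ j := Nat.le_of_dvd (by omega) h1
  have h4 : (2:ℕ) ^ (j - 1) ≤ p ^ padicValNat p j := by
    calc (2:ℕ) ^ (j-1) ≤ 2 ^ padicValNat p j := Nat.pow_le_pow_right (by norm_num) (by omega)
    _ ≤ p ^ padicValNat p j := Nat.pow_le_pow_left hp.out.two_le _
  have h5 := two_pow_gt hj
  have h7 : (2:ℕ) ^ (j-1) = 2 ^ (j-2) * 2 := by
    have : j - 1 = (j-2) + 1 := by omega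
    rw [this, pow_succ]
  have h8 : 2 ≤ (2:ℕ) ^ (j-2) := by
    calc (2:ℕ) = 2^1 := by norm_num
    _ ≤ 2^(j-2) := Nat.pow_le_pow_right (by norm_num) (by omega)
  omega

lemma norm_nat {j : ℕ} (hj : j ≠ 0) :
    padicNorm p (j : ℚ) = (p : ℚ) ^ (-(padicValNat p j : ℤ)) := by
  rw [padicNorm.eq_zpow_of_nonzero (by exact_mod_cast hj), padicValRat.of_nat]

lemma norm_nat_inv {j : ℕ} (hj : j ≠ 0) :
    padicNorm p ((j : ℚ)⁻¹) = (p : ℚ) ^ ((padicValNat p j : ℤ)) := by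
  rw [padicNorm.eq_zpow_of_nonzero (by positivity), padicValRat.inv, padicValRat.of_nat]
  simp

lemma one_lt_pq : (1:ℚ) < (p:ℚ) := by exact_mod_cast hp.out.one_lt

lemma zpow_mono {a b : ℤ} (h : a ≤ b) : (p:ℚ) ^ a ≤ (p:ℚ) ^ b :=
  zpow_le_zpow_right₀ (le_of_lt one_lt_pq) h

/-- Faulhaber's formula, rearranged. -/
lemma faulhaber (n m : ℕ) (hn : 1 ≤ n) :
    (m : ℚ) * bernoulli n = (∑ k ∈ range m, (k : ℚ) ^ n)
      - ∑ i ∈ range n, bernoulli i * (n.choose i) * (m:ℚ) ^ (n + 1 - i) * (((n + 1 - i : ℕ)) : ℚ)⁻¹ := by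
  have h := sum_range_pow m n
  rw [Finset.sum_range_succ] at h
  have hlast : bernoulli n * ((n+1).choose n) * (m:ℚ) ^ (n + 1 - n) / (n+1) = (m:ℚ) * bernoulli n := by
    rw [Nat.choose_succ_self_right]
    have : n + 1 - n = 1 := by omega
    rw [this]
    have hn1 : ((n:ℚ) + 1) ≠ 0 := by positivity
    field_simp
    push_cast
    ring
  rw [hlast] at h
  have hterm : ∀ i ∈ range n,
      bernoulli i * ((n+1).choose i) * (m:ℚ) ^ (n + 1 - i) / (n+1)
        = bernoulli i * (n.choose i) * (m:ℚ) ^ (n + 1 - i) * (((n + 1 - i : ℕ)) : ℚ)⁻¹ := by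
    intro i hi
    rw [mem_range] at hi
    have hkey : (n.choose i : ℚ) * (n + 1) = ((n+1).choose i : ℚ) * ((n + 1 - i : ℕ) : ℚ) := by
      exact_mod_cast congrArg (Nat.cast (R := ℚ)) (Nat.choose_mul_succ_eq n i)
    have h1 : ((n:ℚ) + 1) ≠ 0 := by positivity
    have h2 : (((n + 1 - i : ℕ)) : ℚ) ≠ 0 := Nat.cast_ne_zero.mpr (by omega)
    field_simp
    linear_combination (-(bernoulli i * (m:ℚ)^(n+1-i))) * hkey
  rw [Finset.sum_congr rfl hterm] at h
  linarith [h]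


variable {p : ℕ} [hp : Fact p.Prime]

lemma bernoulli_odd_zero {i : ℕ} (hodd : Odd i) (h1 : 1 < i) : bernoulli i = 0 := by
  rw [bernoulli_eq_bernoulli'_of_ne_one (by omega)]
  exact bernoulli'_eq_zero_of_odd hodd h1

lemma pq_pos : (0:ℚ) < (p:ℚ) := by exact_mod_cast hp.out.pos

lemma norm_p_pow (j : ℕ) : padicNorm p ((p:ℚ)^j) = (p:ℚ) ^ (-(j:ℤ)) := by
  have h : ((p:ℚ))^j = ((p^j : ℕ) : ℚ) := by push_cast; ring
  rw [h, norm_nat (pow_ne_zero _ hp.out.ne_zero), padicValNat.prime_pow]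

lemma bound_mul4 {a b c d : ℚ} {za zb zc zd : ℤ} (ha : padicNorm p a ≤ (p:ℚ)^za)
    (hb : padicNorm p b ≤ (p:ℚ)^zb) (hc : padicNorm p c ≤ (p:ℚ)^zc)
    (hd : padicNorm p d ≤ (p:ℚ)^zd) :
    padicNorm p (a*b*c*d) ≤ (p:ℚ)^(za+zb+zc+zd) := by
  have hp0 : (0:ℚ) < (p:ℚ) := pq_pos
  rw [padicNorm.mul, padicNorm.mul, padicNorm.mul, zpow_add₀ (ne_of_gt hp0),
    zpow_add₀ (ne_of_gt hp0), zpow_add₀ (ne_of_gt hp0)]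
  have n2 := padicNorm.nonneg (p := p) b
  have n3 := padicNorm.nonneg (p := p) c
  have n4 := padicNorm.nonneg (p := p) d
  exact mul_le_mul (mul_le_mul (mul_le_mul ha hb n2 (by positivity)) hc n3 (by positivity))
    hd n4 (by positivity)

lemma err1 {n : ℕ} (hn : 2 ≤ n) (hne : Even n)
    (IH : ∀ i, i < n → padicNorm p (bernoulli i) ≤ p) :
    ∀ i ∈ range n, padicNorm p (bernoulli i * (n.choose i) * (p:ℚ) ^ (n + 1 - i)
      * (((n + 1 - i : ℕ)) : ℚ)⁻¹) ≤ (p:ℚ)⁻¹ := by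
  intro i hi
  rw [mem_range] at hi
  have hp0 : (0:ℚ) < (p:ℚ) := pq_pos
  have hpinv : ((p:ℚ))⁻¹ = (p:ℚ)^(-1 : ℤ) := (zpow_neg_one _).symm
  by_cases h1 : i = 1
  · subst h1
    have hn0 : (n:ℚ) ≠ 0 := Nat.cast_ne_zero.mpr (by omega)
    have hexpr : bernoulli 1 * ((n.choose 1 : ℕ):ℚ) * (p:ℚ) ^ (n + 1 - 1) * (((n + 1 - 1 : ℕ)) : ℚ)⁻¹
        = (-(2:ℚ)⁻¹) * 1 * ((p:ℚ)^n) * 1 := by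
      rw [bernoulli_one, Nat.choose_one_right]
      have h2 : n + 1 - 1 = n := by omega
      rw [h2]
      field_simp
    rw [hexpr, hpinv]
    have ha : padicNorm p (-(2:ℚ)⁻¹) ≤ (p:ℚ)^(1:ℤ) := by
      rw [padicNorm.neg, show (2:ℚ) = ((2:ℕ):ℚ) by norm_num, norm_nat_inv (by norm_num)]
      exact zpow_mono (by exact_mod_cast valNat_le_sub_one (p := p) (j := 2) (by norm_num))
    have hb : padicNorm p (1:ℚ) ≤ (p:ℚ)^(0:ℤ) := by rw [padicNorm.one, zpow_zero]
    have hc : padicNorm p ((p:ℚ)^n) ≤ (p:ℚ)^(-(n:ℤ)) := le_of_eq (norm_p_pow n)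
    calc padicNorm p ((-(2:ℚ)⁻¹) * 1 * ((p:ℚ)^n) * 1) ≤ (p:ℚ)^((1:ℤ)+0+(-(n:ℤ))+0) :=
          bound_mul4 ha hb hc hb
      _ ≤ (p:ℚ)^(-1:ℤ) := zpow_mono (by omega)
  by_cases hodd : Odd i
  · have hz : bernoulli i = 0 := bernoulli_odd_zero hodd (by rcases hodd with ⟨k, hk⟩; omega)
    rw [hz]
    simpa using le_of_lt (inv_pos.mpr hp0)
  -- even i case
  · have hieven : Even i := Nat.not_odd_iff_even.mp hodd
    have hj3 : 3 ≤ n + 1 - i := by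
      have h1 := Nat.even_iff.mp hieven
      have h2 := Nat.even_iff.mp hne
      omega
    have hjne : n + 1 - i ≠ 0 := by omega
    have ha : padicNorm p (bernoulli i) ≤ (p:ℚ)^(1:ℤ) := by
      rw [zpow_one]; exact IH i hi
    have hb : padicNorm p ((n.choose i : ℕ):ℚ) ≤ (p:ℚ)^(0:ℤ) := by
      rw [zpow_zero]; exact padicNorm.of_nat _
    have hc : padicNorm p ((p:ℚ)^(n+1-i)) ≤ (p:ℚ)^(-((n+1-i : ℕ):ℤ)) := le_of_eq (norm_p_pow _)
    have hd : padicNorm p ((((n + 1 - i : ℕ)) : ℚ)⁻¹) ≤ (p:ℚ)^(((n+1-i : ℕ):ℤ) - 2) := by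
      rw [norm_nat_inv hjne]
      have := valNat_le_sub_two (p := p) hj3
      exact zpow_mono (by omega)
    rw [hpinv]
    calc padicNorm p _ ≤ (p:ℚ)^((1:ℤ) + 0 + (-((n+1-i : ℕ):ℤ)) + (((n+1-i : ℕ):ℤ) - 2)) :=
          bound_mul4 ha hb hc hd
      _ ≤ (p:ℚ)^(-1:ℤ) := zpow_mono (by omega)

lemma bernoulli_norm_le : ∀ i : ℕ, padicNorm p (bernoulli i) ≤ p := by
  intro i
  induction i using Nat.strong_induction_on with
  | _ i IH =>
    have hp1 : (1:ℚ) ≤ (p:ℚ) := by exact_mod_cast hp.out.one_le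
    rcases Nat.lt_or_ge i 2 with h2 | h2
    · interval_cases i
      · simpa [bernoulli_zero] using hp1
      · rw [bernoulli_one]
        have : padicNorm p (-1/2 : ℚ) = padicNorm p ((2:ℚ)⁻¹) := by
          rw [show (-1/2 : ℚ) = -(2:ℚ)⁻¹ by norm_num, padicNorm.neg]
        rw [this, show (2:ℚ) = ((2:ℕ):ℚ) by norm_num, norm_nat_inv (p := p) (by norm_num)]
        calc (p:ℚ) ^ ((padicValNat p 2 : ℤ)) ≤ (p:ℚ)^(1:ℤ) :=
              zpow_mono (by exact_mod_cast valNat_le_sub_one (p := p) (j := 2) (by norm_num))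
          _ = p := zpow_one _
    by_cases hodd : Odd i
    · rw [bernoulli_odd_zero hodd (by omega)]
      simpa using le_trans zero_le_one hp1
    have hieven : Even i := Nat.not_odd_iff_even.mp hodd
    have hfaul := faulhaber i p (by omega)
    have herr : padicNorm p (∑ j ∈ range i, bernoulli j * (i.choose j) * (p:ℚ) ^ (i + 1 - j)
        * (((i + 1 - j : ℕ)) : ℚ)⁻¹) ≤ (p:ℚ)⁻¹ :=
      padicNorm.sum_le' (err1 h2 hieven IH) (by positivity)
    have hS : padicNorm p (∑ k ∈ range p, (k:ℚ)^i) ≤ 1 := by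
      have hcast : (∑ k ∈ range p, (k:ℚ)^i) = (((∑ k ∈ range p, k^i : ℕ)) : ℚ) := by push_cast; ring
      rw [hcast]; exact padicNorm.of_nat _
    have hmain : padicNorm p ((p:ℚ) * bernoulli i) ≤ 1 := by
      rw [hfaul]
      refine le_trans padicNorm.sub (max_le hS (le_trans herr ?_))
      exact inv_le_one_of_one_le₀ hp1
    rw [padicNorm.mul, padicNorm.padicNorm_p_of_prime] at hmain
    have hp0 : (0:ℚ) < (p:ℚ) := pq_pos
    calc padicNorm p (bernoulli i) = (p:ℚ) * ((p:ℚ)⁻¹ * padicNorm p (bernoulli i)) := by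
          field_simp
      _ ≤ (p:ℚ) * 1 := by
          exact mul_le_mul_of_nonneg_left hmain (le_of_lt hp0)
      _ = p := mul_one _

lemma key1 {n : ℕ} (hn : 2 ≤ n) (hne : Even n) :
    padicNorm p ((p:ℚ) * bernoulli n - ∑ k ∈ range p, (k:ℚ)^n) ≤ (p:ℚ)⁻¹ := by
  have hfaul := faulhaber n p (by omega)
  have hrw : (p:ℚ) * bernoulli n - ∑ k ∈ range p, (k:ℚ)^n
      = -(∑ i ∈ range n, bernoulli i * (n.choose i) * (p:ℚ) ^ (n + 1 - i)
        * (((n + 1 - i : ℕ)) : ℚ)⁻¹) := by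
    rw [hfaul]; ring
  rw [hrw, padicNorm.neg]
  exact padicNorm.sum_le' (err1 hn hne (fun i _ => bernoulli_norm_le i)) (by positivity)


variable {p : ℕ} [hp : Fact p.Prime]

lemma zmod_powsum (n : ℕ) (hn : 1 ≤ n) :
    ((∑ k ∈ range p, (k:ℤ)^n : ℤ) : ZMod p) = if (p - 1) ∣ n then -1 else 0 := by
  push_cast
  have h1 : (∑ k ∈ range p, ((k : ZMod p))^n) = ∑ x : ZMod p, x^n := by
    refine Finset.sum_nbij' (fun k => (k : ZMod p)) (fun x => x.val) ?_ ?_ ?_ ?_ ?_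
    · intro a _; exact Finset.mem_univ _
    · intro b _; rw [Finset.mem_range]; exact ZMod.val_lt b
    · intro a ha; rw [Finset.mem_range] at ha; exact ZMod.val_cast_of_lt ha
    · intro b _; exact ZMod.natCast_rightInverse b
    · intro a _; rfl
  have h2 : ∑ x : ZMod p, x^n = ∑ x : (ZMod p)ˣ, (x:ZMod p)^n := by
    classical
    let φ : (ZMod p)ˣ ↪ ZMod p := ⟨fun x => x, fun _ _ h => Units.ext h⟩
    have hmap : univ.map φ = univ \ {0} := by
      ext x
      simp only [mem_map, mem_univ, Function.Embedding.coeFn_mk, true_and, mem_sdiff,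
        mem_singleton, φ]
      exact ⟨by rintro ⟨u, rfl⟩; exact u.ne_zero, fun h => ⟨(Ne.isUnit h).unit, rfl⟩⟩
    calc ∑ x : ZMod p, x^n = ∑ x ∈ univ \ {(0 : ZMod p)}, x ^ n := by
          rw [← Finset.sum_sdiff (Finset.subset_univ ({0} : Finset (ZMod p))), sum_singleton,
            zero_pow (by omega), add_zero]
      _ = ∑ x : (ZMod p)ˣ, (x:ZMod p)^n := by
          rw [← hmap, Finset.sum_map]
          rfl
  rw [h1, h2]
  have h3 := FiniteField.sum_pow_units (ZMod p) n
  rwa [ZMod.card p] at h3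



variable {p : ℕ} [hp : Fact p.Prime]

lemma int_norm_le {z : ℤ} (h : ((z : ℤ) : ZMod p) = 0) : padicNorm p (z:ℚ) ≤ (p:ℚ)⁻¹ := by
  have hdvd : ((p:ℤ)) ∣ z := (ZMod.intCast_zmod_eq_zero_iff_dvd z p).mp h
  have h2 : ((p^1 : ℕ) : ℤ) ∣ z := by simpa using hdvd
  have := (padicNorm.dvd_iff_norm_le (p := p) (n := 1) (z := z)).mp h2
  simpa using this

lemma powsum_norm₁ {n : ℕ} (hn : 1 ≤ n) (h : (p-1) ∣ n) :
    padicNorm p ((∑ k ∈ range p, (k:ℚ)^n) + 1) ≤ (p:ℚ)⁻¹ := by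
  have hc : (∑ k ∈ range p, (k:ℚ)^n) + 1 = (((∑ k ∈ range p, (k:ℤ)^n) + 1 : ℤ) : ℚ) := by
    push_cast; ring
  rw [hc]
  apply int_norm_le
  push_cast [zmod_powsum n hn]
  simp [h]

lemma powsum_norm₂ {n : ℕ} (hn : 1 ≤ n) (h : ¬ (p-1) ∣ n) :
    padicNorm p (∑ k ∈ range p, (k:ℚ)^n) ≤ (p:ℚ)⁻¹ := by
  have hc : (∑ k ∈ range p, (k:ℚ)^n) = (((∑ k ∈ range p, (k:ℤ)^n) : ℤ) : ℚ) := by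
    push_cast; ring
  rw [hc]
  apply int_norm_le
  rw [zmod_powsum n hn]
  simp [h]



theorem vsc_norm₁ {n : ℕ} (hn : 2 ≤ n) (hne : Even n) (h : (p-1) ∣ n) :
    padicNorm p (bernoulli n) = p := by
  have hp0 : (0:ℚ) < (p:ℚ) := pq_pos
  have hp1 : (1:ℚ) < (p:ℚ) := by exact_mod_cast hp.out.one_lt
  have hA := key1 (p := p) hn hne
  have hB := powsum_norm₁ (p := p) (le_trans (by norm_num) hn) h
  set S := ∑ k ∈ range p, (k:ℚ)^n with hS
  have hsum : (p:ℚ) * bernoulli n + 1 = ((p:ℚ) * bernoulli n - S) + (S + 1) := by ring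
  have h1 : padicNorm p ((p:ℚ) * bernoulli n + 1) ≤ (p:ℚ)⁻¹ := by
    rw [hsum]
    exact le_trans padicNorm.nonarchimedean (max_le hA hB)
  have hlt : padicNorm p ((p:ℚ) * bernoulli n + 1) < 1 :=
    lt_of_le_of_lt h1 (by rw [inv_lt_one_iff₀]; right; exact hp1)
  have hne1 : padicNorm p ((p:ℚ) * bernoulli n + 1) ≠ padicNorm p (-1 : ℚ) := by
    rw [padicNorm.neg, padicNorm.one]; exact ne_of_lt hlt
  have h2 : padicNorm p ((p:ℚ) * bernoulli n) = 1 := by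
    have : (p:ℚ) * bernoulli n = ((p:ℚ) * bernoulli n + 1) + (-1) := by ring
    rw [this, padicNorm.add_eq_max_of_ne hne1, padicNorm.neg, padicNorm.one]
    exact max_eq_right (le_of_lt hlt)
  rw [padicNorm.mul, padicNorm.padicNorm_p_of_prime] at h2
  field_simp at h2
  linarith [h2]

theorem vsc_norm₂ {n : ℕ} (hn : 2 ≤ n) (hne : Even n) (h : ¬ (p-1) ∣ n) :
    padicNorm p (bernoulli n) ≤ 1 := by
  have hp0 : (0:ℚ) < (p:ℚ) := pq_pos
  have hA := key1 (p := p) hn hne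
  have hB := powsum_norm₂ (p := p) (le_trans (by norm_num) hn) h
  set S := ∑ k ∈ range p, (k:ℚ)^n with hS
  have h1 : padicNorm p ((p:ℚ) * bernoulli n) ≤ (p:ℚ)⁻¹ := by
    have : (p:ℚ) * bernoulli n = ((p:ℚ) * bernoulli n - S) + S := by ring
    rw [this]
    exact le_trans padicNorm.nonarchimedean (max_le hA hB)
  rw [padicNorm.mul, padicNorm.padicNorm_p_of_prime] at h1
  have hinv : (0:ℚ) < (p:ℚ)⁻¹ := inv_pos.mpr hp0
  by_contra hgt
  push_neg at hgt
  nlinarith [h1, hinv]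



lemma binom_rem (a b : ℤ) (n : ℕ) (hn : 2 ≤ n) :
    ∃ z : ℤ, (a + b)^n = a^n + n * a^(n-1) * b + b^2 * z := by
  obtain ⟨m, rfl⟩ : ∃ m, n = m + 2 := ⟨n - 2, by omega⟩
  refine ⟨∑ i ∈ range (m+1), a^i * b^(m-i) * ((m+2).choose i : ℤ), ?_⟩
  rw [add_pow]
  rw [sum_range_succ, sum_range_succ]
  have h1 : ∀ i ∈ range (m+1), a^i * b^(m+2-i) * ((m+2).choose i : ℤ)
      = b^2 * (a^i * b^(m-i) * ((m+2).choose i : ℤ)) := by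
    intro i hi
    rw [mem_range] at hi
    have : m + 2 - i = (m - i) + 2 := by omega
    rw [this, pow_add]
    ring
  rw [Finset.sum_congr rfl h1, ← Finset.mul_sum,
    show m + 2 - (m+1) = 1 from by omega, show m + 2 - (m+2) = 0 from by omega,
    show m + 2 - 1 = m + 1 from by omega, Nat.choose_succ_self_right, Nat.choose_self]
  push_cast
  ring

lemma perm_sum {c m : ℕ} (n : ℕ) (hc : Nat.Coprime c m) (hm : 0 < m) :
    ∑ k ∈ range m, (((c * k) % m : ℕ) : ℤ)^n = ∑ k ∈ range m, (k : ℤ)^n := by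
  have hφ : 0 < Nat.totient m := Nat.totient_pos.mpr hm
  set d := c ^ (Nat.totient m - 1) with hd
  have hcd : (c * d) % m = 1 % m := by
    have h1 : c * d = c ^ (Nat.totient m) := by
      rw [hd, ← pow_succ']
      congr 1
      omega
    have := Nat.ModEq.pow_totient hc
    rw [h1]
    exact this
  refine Finset.sum_nbij' (fun k => (c * k) % m) (fun k => (d * k) % m) ?_ ?_ ?_ ?_ ?_
  · intro a _; rw [mem_range]; exact Nat.mod_lt _ hm
  · intro a _; rw [mem_range]; exact Nat.mod_lt _ hm
  · intro a ha
    rw [mem_range] at ha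
    have h2 : d * ((c * a) % m) % m = (d * (c * a)) % m := by
      rw [Nat.mul_mod, Nat.mod_mod_of_dvd _ (dvd_refl m), ← Nat.mul_mod]
    calc d * ((c * a) % m) % m = (d * (c * a)) % m := h2
      _ = ((c * d) * a) % m := by ring_nf
      _ = (1 * a) % m := by rw [Nat.mul_mod, hcd, ← Nat.mul_mod]
      _ = a := by rw [one_mul]; exact Nat.mod_eq_of_lt ha
  · intro a ha
    rw [mem_range] at ha
    have h2 : c * ((d * a) % m) % m = (c * (d * a)) % m := by
      rw [Nat.mul_mod, Nat.mod_mod_of_dvd _ (dvd_refl m), ← Nat.mul_mod]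
    calc c * ((d * a) % m) % m = (c * (d * a)) % m := h2
      _ = ((c * d) * a) % m := by ring_nf
      _ = (1 * a) % m := by rw [Nat.mul_mod, hcd, ← Nat.mul_mod]
      _ = a := by rw [one_mul]; exact Nat.mod_eq_of_lt ha
  · intro a _; rfl

lemma twist {c m n : ℕ} (hc : Nat.Coprime c m) (hm : 0 < m) (hn : 2 ≤ n) :
    ∃ W Z : ℤ, ((c:ℤ)^n - 1) * (∑ k ∈ range m, (k : ℤ)^n) = (n:ℤ) * m * W + (m:ℤ)^2 * Z := by
  set q : ℕ → ℤ := fun k => ((c:ℤ) * k) / m with hq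
  have hmod : ∀ k : ℕ, (((c * k) % m : ℕ) : ℤ) = (c:ℤ) * k - m * q k := by
    intro k
    push_cast
    rw [Int.emod_def]
  have hz : ∀ k : ℕ, ∃ z : ℤ, ((c:ℤ) * k - (m:ℤ) * q k)^n
      = ((c:ℤ)*k)^n - (n:ℤ) * ((c:ℤ)*k)^(n-1) * ((m:ℤ) * q k) + ((m:ℤ) * q k)^2 * z := by
    intro k
    obtain ⟨z, hz⟩ := binom_rem ((c:ℤ)*k) (-((m:ℤ) * q k)) n hn
    refine ⟨z, ?_⟩
    have h3 : (c:ℤ)*k - (m:ℤ)*q k = (c:ℤ)*k + (-((m:ℤ)*q k)) := by ring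
    rw [h3, hz]
    ring
  choose z hzz using hz
  refine ⟨∑ k ∈ range m, ((c:ℤ)*k)^(n-1) * q k, -∑ k ∈ range m, (q k)^2 * z k, ?_⟩
  have hperm := perm_sum n hc hm
  have hexp : ∑ k ∈ range m, (((c * k) % m : ℕ) : ℤ)^n
      = ∑ k ∈ range m, (((c:ℤ)*k)^n - (n:ℤ) * ((c:ℤ)*k)^(n-1) * ((m:ℤ) * q k)
          + ((m:ℤ) * q k)^2 * z k) := by
    refine Finset.sum_congr rfl fun k _ => ?_
    rw [hmod k]
    exact hzz k
  have hsplit : ∑ k ∈ range m, (((c:ℤ)*k)^n - (n:ℤ) * ((c:ℤ)*k)^(n-1) * ((m:ℤ) * q k)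
          + ((m:ℤ) * q k)^2 * z k)
      = (c:ℤ)^n * (∑ k ∈ range m, (k:ℤ)^n)
        - (n:ℤ) * m * (∑ k ∈ range m, ((c:ℤ)*k)^(n-1) * q k)
        + (m:ℤ)^2 * (∑ k ∈ range m, (q k)^2 * z k) := by
    rw [Finset.sum_add_distrib, Finset.sum_sub_distrib, Finset.mul_sum, Finset.mul_sum,
      Finset.mul_sum]
    congr 1
    · congr 1
      · exact Finset.sum_congr rfl fun k _ => by rw [mul_pow]
      · exact Finset.sum_congr rfl fun k _ => by ring
    · exact Finset.sum_congr rfl fun k _ => by ring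
  have hfin := hperm.symm.trans (hexp.trans hsplit)
  linear_combination (-1 : ℤ) * hfin


variable {p : ℕ} [hp : Fact p.Prime]


lemma exists_c {n : ℕ} (h : ¬ (p - 1) ∣ n) :
    ∃ c : ℕ, Nat.Coprime c p ∧ ¬ ((p:ℤ) ∣ ((c:ℤ)^n - 1)) := by
  obtain ⟨g, hg⟩ := IsCyclic.exists_generator (α := (ZMod p)ˣ)
  have hord : orderOf g = p - 1 := by
    rw [orderOf_eq_card_of_forall_mem_zpowers hg, Nat.card_eq_fintype_card, Fintype.card_units, ZMod.card]
  have hgn : g ^ n ≠ 1 := by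
    intro hcontra
    exact h (hord ▸ orderOf_dvd_of_pow_eq_one hcontra)
  refine ⟨((g : ZMod p)).val, ?_, ?_⟩
  · have hne : ((g : ZMod p)) ≠ 0 := g.ne_zero
    have hdvd : ¬ p ∣ ((g : ZMod p)).val := by
      intro hd
      apply hne
      have := (ZMod.natCast_eq_zero_iff ((g : ZMod p)).val p).mpr hd
      rwa [ZMod.natCast_rightInverse _] at this
    exact (Nat.coprime_comm.mp ((Nat.Prime.coprime_iff_not_dvd hp.out).mpr hdvd))
  · intro hdvd
    apply hgn
    have h0 : (((((g : ZMod p)).val : ℤ)^n - 1 : ℤ) : ZMod p) = 0 :=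
      (ZMod.intCast_zmod_eq_zero_iff_dvd _ p).mpr hdvd
    push_cast at h0
    rw [ZMod.natCast_rightInverse _] at h0
    have h1 : ((g : ZMod p))^n = 1 := by linear_combination (h0 : _)
    ext
    push_cast
    exact h1

theorem adams_norm {n : ℕ} (hn : 2 ≤ n) (h : ¬ (p - 1) ∣ n) :
    padicNorm p (bernoulli n) ≤ (p:ℚ) ^ (-(padicValNat p n : ℤ)) := by
  have hp0 : (0:ℚ) < (p:ℚ) := by exact_mod_cast hp.out.pos
  set e : ℕ := padicValNat p n with he
  set L : ℕ := n + e + 1 with hL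
  set m : ℕ := p ^ L with hm
  have hm0 : 0 < m := pow_pos hp.out.pos _
  obtain ⟨c, hc, hcn⟩ := exists_c (p := p) h
  have hcm : Nat.Coprime c m := Nat.Coprime.pow_right _ hc
  obtain ⟨W, Z, hWZ⟩ := twist hcm hm0 hn
  -- error term bound
  have herr : ∀ i ∈ range n, padicNorm p (bernoulli i * (n.choose i) * (m:ℚ) ^ (n + 1 - i)
      * (((n + 1 - i : ℕ)) : ℚ)⁻¹) ≤ (p:ℚ) ^ ((1 : ℤ) + n - 2*L) := by
    intro i hi
    rw [mem_range] at hi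
    have hj2 : 2 ≤ n + 1 - i := by omega
    have hjn : n + 1 - i ≤ n + 1 := by omega
    have ha : padicNorm p (bernoulli i) ≤ (p:ℚ)^(1:ℤ) := by
      rw [zpow_one]; exact bernoulli_norm_le i
    have hb : padicNorm p ((n.choose i : ℕ):ℚ) ≤ (p:ℚ)^(0:ℤ) := by
      rw [zpow_zero]; exact padicNorm.of_nat _
    have hc2 : padicNorm p ((m:ℚ)^(n+1-i)) ≤ (p:ℚ)^(-(2*L) : ℤ) := by
      have hcast : ((m:ℚ))^(n+1-i) = (p:ℚ)^(L * (n+1-i)) := by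
        rw [hm]; push_cast; rw [← pow_mul]
      rw [hcast, norm_p_pow]
      apply zpow_mono
      have : 2 * L ≤ L * (n + 1 - i) := by nlinarith [hj2]
      omega
    have hd : padicNorm p ((((n + 1 - i : ℕ)) : ℚ)⁻¹) ≤ (p:ℚ)^((n : ℤ)) := by
      rw [norm_nat_inv (by omega)]
      have h1 := valNat_le_sub_one (p := p) (j := n + 1 - i) (by omega)
      apply zpow_mono
      omega
    calc padicNorm p _ ≤ (p:ℚ)^((1:ℤ) + 0 + (-(2*L):ℤ) + (n:ℤ)) := bound_mul4 ha hb hc2 hd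
      _ ≤ (p:ℚ)^((1 : ℤ) + n - 2*L) := zpow_mono (by omega)
  have herrsum : padicNorm p (∑ i ∈ range n, bernoulli i * (n.choose i) * (m:ℚ) ^ (n + 1 - i)
      * (((n + 1 - i : ℕ)) : ℚ)⁻¹) ≤ (p:ℚ) ^ ((1 : ℤ) + n - 2*L) :=
    padicNorm.sum_le' herr (le_of_lt (zpow_pos hp0 _))
  -- RHS bound
  have hXS : padicNorm p ((((n:ℤ) * m * W + (m:ℤ)^2 * Z : ℤ)) : ℚ) ≤ (p:ℚ) ^ (-(e:ℤ) - L) := by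
    have h1 : padicNorm p (((n:ℤ) * m * W : ℤ) : ℚ) ≤ (p:ℚ) ^ (-(e:ℤ) - L) := by
      push_cast
      have hn' : padicNorm p ((n:ℚ)) = (p:ℚ)^(-(e:ℤ)) := norm_nat (by omega)
      have hmq : padicNorm p ((m:ℚ)) = (p:ℚ)^(-(L:ℤ)) := by
        have : ((m:ℚ)) = (p:ℚ)^L := by rw [hm]; push_cast; ring
        rw [this, norm_p_pow]
      rw [padicNorm.mul, padicNorm.mul, hn', hmq]
      calc (p:ℚ)^(-(e:ℤ)) * (p:ℚ)^(-(L:ℤ)) * padicNorm p ((W : ℤ) : ℚ)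
          ≤ (p:ℚ)^(-(e:ℤ)) * (p:ℚ)^(-(L:ℤ)) * 1 := by
            refine mul_le_mul_of_nonneg_left (padicNorm.of_int _) ?_
            positivity
        _ = (p:ℚ)^(-(e:ℤ) - L) := by
            rw [mul_one, ← zpow_add₀ (ne_of_gt hp0),
              show -(e:ℤ) + -(L:ℤ) = -(e:ℤ) - L from by omega]
    have h2 : padicNorm p (((m:ℤ)^2 * Z : ℤ) : ℚ) ≤ (p:ℚ) ^ (-(e:ℤ) - L) := by
      push_cast
      have hmq : padicNorm p ((m:ℚ)^2) = (p:ℚ)^(-(2*L:ℤ)) := by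
        have : ((m:ℚ))^2 = (p:ℚ)^(L*2) := by rw [hm]; push_cast; rw [← pow_mul]
        rw [this, norm_p_pow]
        congr 1
        omega
      rw [padicNorm.mul, hmq]
      calc (p:ℚ)^(-(2*L:ℤ)) * padicNorm p ((Z : ℤ) : ℚ) ≤ (p:ℚ)^(-(2*L:ℤ)) * 1 := by
            refine mul_le_mul_of_nonneg_left (padicNorm.of_int _) ?_
            positivity
        _ ≤ (p:ℚ)^(-(e:ℤ) - L) := by
            rw [mul_one]
            apply zpow_mono
            have : e ≤ L := by omega
            omega
    push_cast
    push_cast at h1 h2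
    exact le_trans padicNorm.nonarchimedean (max_le h1 h2)
  -- put it together
  have hfaul := faulhaber n m (by omega)
  set S : ℚ := ∑ k ∈ range m, (k:ℚ)^n with hS
  set E : ℚ := ∑ i ∈ range n, bernoulli i * (n.choose i) * (m:ℚ) ^ (n + 1 - i)
      * (((n + 1 - i : ℕ)) : ℚ)⁻¹ with hE
  set X : ℚ := (((c:ℤ)^n - 1 : ℤ) : ℚ) with hX
  have hXnorm : padicNorm p X = 1 := (padicNorm.int_eq_one_iff _).mpr hcn
  have hSint : S = (((∑ k ∈ range m, (k:ℤ)^n : ℤ)) : ℚ) := by rw [hS]; push_cast; ring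
  have hXS2 : padicNorm p (X * S) ≤ (p:ℚ) ^ (-(e:ℤ) - L) := by
    have : X * S = (((n:ℤ) * m * W + (m:ℤ)^2 * Z : ℤ) : ℚ) := by
      rw [hX, hSint, ← Int.cast_mul, hWZ]
    rw [this]
    exact hXS
  have hXE : padicNorm p (X * E) ≤ (p:ℚ) ^ (-(e:ℤ) - L) := by
    rw [padicNorm.mul, hXnorm, one_mul]
    refine le_trans herrsum (zpow_mono ?_)
    omega
  have hmain : padicNorm p (X * ((m:ℚ) * bernoulli n)) ≤ (p:ℚ) ^ (-(e:ℤ) - L) := by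
    have hrw : X * ((m:ℚ) * bernoulli n) = X * S + (-(X * E)) := by
      rw [hfaul]; ring
    rw [hrw]
    refine le_trans padicNorm.nonarchimedean (max_le hXS2 ?_)
    rwa [padicNorm.neg]
  rw [padicNorm.mul, hXnorm, one_mul, padicNorm.mul] at hmain
  have hmq : padicNorm p ((m:ℚ)) = (p:ℚ)^(-(L:ℤ)) := by
    have : ((m:ℚ)) = (p:ℚ)^L := by rw [hm]; push_cast; ring
    rw [this, norm_p_pow]
  rw [hmq] at hmain
  have hfin : (p:ℚ)^(-(L:ℤ)) * padicNorm p (bernoulli n) ≤ (p:ℚ)^(-(L:ℤ)) * (p:ℚ)^(-(e:ℤ)) := by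
    rw [← zpow_add₀ (ne_of_gt hp0)]
    refine le_trans hmain (zpow_mono ?_)
    omega
  have hpos : (0:ℚ) < (p:ℚ)^(-(L:ℤ)) := zpow_pos hp0 _
  exact le_of_mul_le_mul_left hfin hpos


variable {p : ℕ} [hp : Fact p.Prime]


lemma den_val_core {q : ℚ} (hq : q ≠ 0) {v : ℤ} (hval : padicValRat p q = v) (hv : v < 0) :
    (padicValNat p q.den : ℤ) = -v := by
  have hnum : q.num ≠ 0 := Rat.num_ne_zero.mpr hq
  have hden : p ∣ q.den := by
    by_contra hnd
    have h0 : padicValNat p q.den = 0 := padicValNat.eq_zero_of_not_dvd hnd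
    rw [padicValRat_def, h0] at hval
    have : (0:ℤ) ≤ padicValInt p q.num := by positivity
    omega
  have hnotnum : ¬ ((p:ℤ) ∣ q.num) := by
    intro hd
    have h1 : p ∣ q.num.natAbs := by
      have := Int.natAbs_dvd_natAbs.mpr hd
      simpa using this
    have h2 : p ∣ Nat.gcd q.num.natAbs q.den := Nat.dvd_gcd h1 hden
    rw [q.reduced] at h2
    have := Nat.le_of_dvd one_pos h2
    have := hp.out.two_le
    omega
  have h0 : padicValInt p q.num = 0 := padicValInt.eq_zero_of_not_dvd hnotnum
  rw [padicValRat_def, h0] at hval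
  omega

lemma den_val_nonneg {q : ℚ} (hq : q ≠ 0) (hval : 0 ≤ padicValRat p q) :
    padicValNat p q.den = 0 := by
  by_contra hne
  have h1 : p ∣ q.den := dvd_of_one_le_padicValNat (by omega)
  have hnotnum : ¬ ((p:ℤ) ∣ q.num) := by
    intro hd
    have h1' : p ∣ q.num.natAbs := by
      have := Int.natAbs_dvd_natAbs.mpr hd
      simpa using this
    have h2 : p ∣ Nat.gcd q.num.natAbs q.den := Nat.dvd_gcd h1' h1
    rw [q.reduced] at h2
    have := Nat.le_of_dvd one_pos h2
    have := hp.out.two_le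
    omega
  have h0 : padicValInt p q.num = 0 := padicValInt.eq_zero_of_not_dvd hnotnum
  rw [padicValRat_def, h0] at hval
  omega

lemma val_of_norm {q : ℚ} (hq : q ≠ 0) {v : ℤ} (h : padicNorm p q = (p:ℚ)^v) :
    padicValRat p q = -v := by
  have hp1 : (1:ℚ) < (p:ℚ) := by exact_mod_cast hp.out.one_lt
  have h2 := padicNorm.eq_zpow_of_nonzero (p := p) hq
  rw [h2] at h
  have := zpow_right_injective₀ (a := (p:ℚ)) (by linarith) (by linarith) h
  omega

lemma val_nonneg_of_norm {q : ℚ} (hq : q ≠ 0) (h : padicNorm p q ≤ 1) :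
    0 ≤ padicValRat p q := by
  have hp1 : (1:ℚ) < (p:ℚ) := by exact_mod_cast hp.out.one_lt
  have h2 := padicNorm.eq_zpow_of_nonzero (p := p) hq
  rw [h2, show (1:ℚ) = (p:ℚ)^(0:ℤ) from (zpow_zero _).symm] at h
  have := (zpow_le_zpow_iff_right₀ hp1).mp h
  omega

lemma q_ne_zero {n : ℕ} (hne : Even n) (h2 : 2 ≤ n) : (bernoulli n / n : ℚ) ≠ 0 := by
  haveI : Fact (Nat.Prime 2) := ⟨Nat.prime_two⟩
  have hB : padicNorm 2 (bernoulli n) = 2 := by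
    have := vsc_norm₁ (p := 2) h2 hne (by simp)
    simpa using this
  have hBne : bernoulli n ≠ 0 := by
    intro h0
    rw [h0, padicNorm.zero] at hB
    norm_num at hB
  have hnne : ((n:ℚ)) ≠ 0 := Nat.cast_ne_zero.mpr (by omega)
  exact div_ne_zero hBne hnne

lemma den_val {n : ℕ} (hne : Even n) (h2 : 2 ≤ n) :
    padicValNat p ((bernoulli n / n : ℚ)).den
      = if (p - 1) ∣ n then 1 + padicValNat p n else 0 := by
  have hq := q_ne_zero hne h2
  have hp0 : (0:ℚ) < (p:ℚ) := by exact_mod_cast hp.out.pos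
  have hnne : ((n:ℚ)) ≠ 0 := Nat.cast_ne_zero.mpr (by omega)
  have hnorm_n : padicNorm p ((n:ℚ)) = (p:ℚ)^(-(padicValNat p n : ℤ)) := norm_nat (by omega)
  by_cases h : (p - 1) ∣ n
  · rw [if_pos h]
    have hnormq : padicNorm p (bernoulli n / n) = (p:ℚ)^((1 + padicValNat p n : ℕ) : ℤ) := by
      rw [padicNorm.div, vsc_norm₁ h2 hne h, hnorm_n]
      rw [zpow_neg, div_eq_mul_inv, inv_inv,
        show ((1 + padicValNat p n : ℕ) : ℤ) = (padicValNat p n : ℤ) + 1 from by omega,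
        zpow_add_one₀ (ne_of_gt hp0)]
      ring
    have hval := val_of_norm (p := p) hq hnormq
    have hvlt : (-(((1 + padicValNat p n : ℕ)) : ℤ)) < 0 := by omega
    have := den_val_core (p := p) hq hval hvlt
    omega
  · rw [if_neg h]
    have hnormq : padicNorm p (bernoulli n / n) ≤ 1 := by
      rw [padicNorm.div, hnorm_n]
      have hB := adams_norm (p := p) h2 h
      rw [zpow_neg, div_eq_mul_inv, inv_inv]
      calc padicNorm p (bernoulli n) * (p:ℚ)^((padicValNat p n : ℤ))
          ≤ (p:ℚ)^(-(padicValNat p n : ℤ)) * (p:ℚ)^((padicValNat p n : ℤ)) := by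
            exact mul_le_mul_of_nonneg_right hB (le_of_lt (zpow_pos hp0 _))
        _ = 1 := by rw [← zpow_add₀ (ne_of_gt hp0)]; simp
    exact den_val_nonneg hq (val_nonneg_of_norm hq hnormq)


end VSaux

open VSaux in
/-- Von Staudt's second theorem: for even n ≥ 2, the denominator of B_n/n in lowest
terms is the product of p^{1+ν_p(n)} over all primes p with (p-1) ∣ n. -/
theorem vonStaudt_second (n : ℕ) (hn : Even n) (h2 : 2 ≤ n) :
    ((bernoulli n / n : ℚ)).den
      = ∏ p ∈ (range (n+2)).filter (fun p => p.Prime ∧ (p-1) ∣ n),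
          p^(1 + padicValNat p n) := by
  set q : ℚ := bernoulli n / n with hq
  have hden0 : q.den ≠ 0 := q.den_nz
  have key : ∀ p : ℕ, p.Prime →
      padicValNat p q.den = if (p - 1) ∣ n then 1 + padicValNat p n else 0 := by
    intro p hp
    haveI : Fact p.Prime := ⟨hp⟩
    exact den_val hn h2
  have hsub : q.den.primeFactors ⊆ (range (n+2)).filter (fun p => p.Prime ∧ (p-1) ∣ n) := by
    intro p hpmem
    have hprime : p.Prime := Nat.prime_of_mem_primeFactors hpmem
    have hdvd : p ∣ q.den := Nat.dvd_of_mem_primeFactors hpmem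
    haveI : Fact p.Prime := ⟨hprime⟩
    have hval : 1 ≤ padicValNat p q.den :=
      one_le_padicValNat_of_dvd hden0 hdvd
    have hcond : (p - 1) ∣ n := by
      by_contra hX
      rw [key p hprime, if_neg hX] at hval
      omega
    have hle : p - 1 ≤ n := Nat.le_of_dvd (by omega) hcond
    rw [Finset.mem_filter, Finset.mem_range]
    have := hprime.two_le
    exact ⟨by omega, hprime, hcond⟩
  calc q.den = ∏ p ∈ q.den.primeFactors, p ^ q.den.factorization p := by
        rw [← Nat.prod_factorization_eq_prod_primeFactors (f := fun p k => p ^ k),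
          Nat.factorization_prod_pow_eq_self hden0]
    _ = ∏ p ∈ (range (n+2)).filter (fun p => p.Prime ∧ (p-1) ∣ n), p ^ q.den.factorization p := by
        refine Finset.prod_subset hsub fun x _ hx => ?_
        have : q.den.factorization x = 0 := by
          rw [← Nat.support_factorization] at hx
          exact Finsupp.notMem_support_iff.mp hx
        rw [this, pow_zero]
    _ = ∏ p ∈ (range (n+2)).filter (fun p => p.Prime ∧ (p-1) ∣ n), p ^ (1 + padicValNat p n) := by
        refine Finset.prod_congr rfl fun p hpmem => ?_
        rw [Finset.mem_filter] at hpmem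
        obtain ⟨hrange, hprime, hdvd⟩ := hpmem
        rw [Nat.factorization_def _ hprime, key p hprime, if_pos hdvd]
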